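/- Let t ≥ 1. For n ≥ 0 let a_n denote the number of Deutsch paths of length n from height t to height 0 all of whose heights h_i satisfy h_i ≥ 0 (no upper bound). Then in the formal power series ring ℤ[[v]], the series S = Σ_{n≥0} a_n · vⁿ · ((1+v+v²)⁻¹)ⁿ satisfies S · (1+v)² = v · (1+v+v²) · (1+v)^{t}. -/

import Mathlib

open PowerSeries Finset

/-- The power series `1 + v + v²` over `ℤ`. -/
noncomputable def q : PowerSeries ℤ := 1 + X + X ^ 2

/-- `v · (1+v+v²)⁻¹` as a formal power series over `ℤ`. -/
noncomputable def w : PowerSeries ℤ := X * PowerSeries.invOfUnit q 1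

/-- `p` is a Deutsch path of length `n`: each step is either an up-step `+1`
or a down-step of arbitrary (negative) size. -/
def IsDeutschPath (n : ℕ) (p : Fin (n + 1) → ℤ) : Prop :=
  ∀ i : Fin n, p i.succ - p i.castSucc = 1 ∨ p i.succ - p i.castSucc ≤ -1

/-- Number of Deutsch paths of length `n` from height `a` to height `b`
all of whose heights satisfy the predicate `P`. -/
noncomputable def pathCount (n : ℕ) (a b : ℤ) (P : ℤ → Prop) : ℕ :=
  Nat.card {p : Fin (n + 1) → ℤ //
    p 0 = a ∧ p (Fin.last n) = b ∧ (∀ i, P (p i)) ∧ IsDeutschPath n p}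

/-- The power series `Σ_{n≥0} a_n · vⁿ · ((1+v+v²)⁻¹)ⁿ`.  Since the `n`-th
summand has order `≥ n`, its coefficient of `v^N` is the (finite) sum of the
corresponding coefficients of the summands with `n ≤ N`. -/
noncomputable def series (a : ℕ → ℕ) : PowerSeries ℤ :=
  PowerSeries.mk fun N => ∑ n ∈ range (N + 1), (a n : ℤ) * coeff N (w ^ n)

abbrev PathSet (n : ℕ) (a : ℤ) : Type :=
  {p : Fin (n + 1) → ℤ //
    p 0 = a ∧ p (Fin.last n) = 0 ∧ (∀ i, (0:ℤ) ≤ p i) ∧ IsDeutschPath n p}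

lemma pathCount_eq (n : ℕ) (a : ℤ) :
    pathCount n a 0 (fun x => 0 ≤ x) = Nat.card (PathSet n a) := rfl

lemma step_le {n : ℕ} {p : Fin (n+1) → ℤ} (hd : IsDeutschPath n p) (i : Fin n) :
    p i.succ ≤ p i.castSucc + 1 := by
  rcases hd i with h | h <;> omega

lemma height_le {n : ℕ} {p : Fin (n+1) → ℤ} (hd : IsDeutschPath n p) (a : ℤ)
    (h0 : p 0 = a) (i : Fin (n+1)) : p i ≤ a + i.val := by
  induction i using Fin.induction with
  | zero => simp [h0]
  | succ j ih =>
      have := step_le hd j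
      have : p j.succ ≤ p j.castSucc + 1 := this
      have h2 : p j.castSucc ≤ a + j.val := by simpa using ih
      simp only [Fin.val_succ]
      push_cast
      omega

instance pathSetFinite (n : ℕ) (a : ℤ) : Finite (PathSet n a) := by
  have hmem : ∀ p : PathSet n a, ∀ i, p.1 i ∈ Set.Icc (0:ℤ) (a + n) := by
    rintro ⟨p, h0, hl, hn, hd⟩ i
    refine ⟨hn i, show p i ≤ a + (n:ℤ) from ?_⟩
    have h1 := height_le hd a h0 i
    have h2 : (i : ℕ) ≤ n := Fin.is_le i
    omega
  have hf : Set.Finite (Set.Icc (0:ℤ) (a+n)) := Set.finite_Icc _ _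
  haveI : Finite (Set.Icc (0:ℤ) (a+n)) := hf
  apply Finite.of_injective (fun p : PathSet n a => (fun i => (⟨p.1 i, hmem p i⟩ : Set.Icc (0:ℤ) (a+n))))
  intro p q h
  ext i
  exact congrArg Subtype.val (congrFun h i)

lemma card_pathSet_zero (a : ℤ) :
    Nat.card (PathSet 0 a) = if a = 0 then 1 else 0 := by
  split_ifs with h
  · subst h
    have : ∀ p : PathSet 0 0, p = ⟨fun _ => 0, rfl, rfl, fun _ => le_refl 0, fun i => i.elim0⟩ := by
      rintro ⟨p, h0, hl, hn, hd⟩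
      ext i
      have : i = 0 := Fin.ext (Nat.lt_one_iff.mp i.isLt)
      simp [this, h0]
    haveI : Unique (PathSet 0 0) := ⟨⟨_⟩, this⟩
    simp [Nat.card_unique]
  · haveI : IsEmpty (PathSet 0 a) := by
      constructor
      rintro ⟨p, h0, hl, hn, hd⟩
      exact h (by rw [← h0]; rw [← hl]; rfl)
    simp

lemma tail_path {n : ℕ} (p : Fin (n+2) → ℤ) (hl : p (Fin.last (n+1)) = 0)
    (hn : ∀ i, 0 ≤ p i) (hd : IsDeutschPath (n+1) p) :
    Fin.tail p (Fin.last n) = 0 ∧ (∀ i, (0:ℤ) ≤ Fin.tail p i) ∧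
      IsDeutschPath n (Fin.tail p) := by
  refine ⟨?_, fun i => hn _, fun i => ?_⟩
  · show p (Fin.last n).succ = 0
    rw [Fin.succ_last]; exact hl
  · have := hd i.succ
    simpa [Fin.tail, ← Fin.succ_castSucc] using this

lemma cons_path {n : ℕ} {a v : ℤ} (ha : 0 ≤ a) (hstep : v - a = 1 ∨ v - a ≤ -1)
    (f : Fin (n+1) → ℤ) (h0 : f 0 = v) (hl : f (Fin.last n) = 0) (hn : ∀ i, 0 ≤ f i)
    (hd : IsDeutschPath n f) :
    (Fin.cons a f : Fin (n+2) → ℤ) 0 = a ∧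
      (Fin.cons a f : Fin (n+2) → ℤ) (Fin.last (n+1)) = 0 ∧
      (∀ i, (0:ℤ) ≤ (Fin.cons a f : Fin (n+2) → ℤ) i) ∧
      IsDeutschPath (n+1) (Fin.cons a f) := by
  refine ⟨rfl, ?_, fun i => ?_, fun i => ?_⟩
  · rw [← Fin.succ_last, Fin.cons_succ, hl]
  · induction i using Fin.cases with
    | zero => simpa using ha
    | succ j => simpa using hn j
  · induction i using Fin.cases with
    | zero =>
        simp only [Fin.succ_zero_eq_one, Fin.castSucc_zero, Fin.cons_zero]
        rw [show ((1:Fin (n+2))) = Fin.succ 0 from (Fin.succ_zero_eq_one).symm,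
          Fin.cons_succ, h0]
        exact hstep
    | succ j =>
        have := hd j
        simpa [← Fin.succ_castSucc] using this

lemma first_step {n : ℕ} {a : ℤ} (p : PathSet (n+1) a) :
    p.1 1 - a = 1 ∨ p.1 1 - a ≤ -1 := by
  obtain ⟨p, h0, hl, hn, hd⟩ := p
  have := hd 0
  simpa [Fin.succ_zero_eq_one, h0] using this

lemma sigma_mk_eq {n a : ℕ} {x y : Fin a} (h : x = y)
    (u : PathSet n (x:ℤ)) (v : PathSet n (y:ℤ)) (huv : u.1 = v.1) :
    (⟨x,u⟩ : Σ b : Fin a, PathSet n (b:ℤ)) = ⟨y,v⟩ := by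
  subst h; exact congrArg _ (Subtype.ext huv)

noncomputable def pathEquiv (n a : ℕ) :
    PathSet (n+1) (a:ℤ) ≃ PathSet n ((a:ℤ)+1) ⊕ (Σ b : Fin a, PathSet n (b:ℤ)) where
  toFun p :=
    if h : p.1 1 = (a:ℤ)+1 then
      Sum.inl ⟨Fin.tail p.1, by rw [show Fin.tail p.1 0 = p.1 1 from rfl, h],
        (tail_path p.1 p.2.2.1 p.2.2.2.1 p.2.2.2.2).1,
        (tail_path p.1 p.2.2.1 p.2.2.2.1 p.2.2.2.2).2.1,
        (tail_path p.1 p.2.2.1 p.2.2.2.1 p.2.2.2.2).2.2⟩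
    else
      Sum.inr ⟨⟨(p.1 1).toNat, by
          have hs := first_step p
          have hnn := p.2.2.2.1 1
          omega⟩,
        ⟨Fin.tail p.1, by
          show p.1 1 = _
          have hnn := p.2.2.2.1 1
          simp [Int.toNat_of_nonneg hnn],
        (tail_path p.1 p.2.2.1 p.2.2.2.1 p.2.2.2.2).1,
        (tail_path p.1 p.2.2.1 p.2.2.2.1 p.2.2.2.2).2.1,
        (tail_path p.1 p.2.2.1 p.2.2.2.1 p.2.2.2.2).2.2⟩⟩
  invFun s :=
    match s with
    | Sum.inl f => ⟨Fin.cons (a:ℤ) f.1,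
        cons_path (Int.natCast_nonneg a) (Or.inl (by ring)) f.1 f.2.1 f.2.2.1 f.2.2.2.1 f.2.2.2.2⟩
    | Sum.inr ⟨b, f⟩ => ⟨Fin.cons (a:ℤ) f.1,
        cons_path (Int.natCast_nonneg a)
          (Or.inr (by have : (b:ℕ) < a := b.isLt; omega)) f.1 f.2.1 f.2.2.1 f.2.2.2.1 f.2.2.2.2⟩
  left_inv p := by
    apply Subtype.ext
    have hc : Fin.cons ((a:ℤ)) (Fin.tail p.1) = p.1 := by
      have hct := Fin.cons_self_tail (α := fun _ => ℤ) p.1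
      rw [p.2.1] at hct; exact hct
    by_cases h : p.1 1 = (a:ℤ)+1
    · simp only [dif_pos h]; exact hc
    · simp only [dif_neg h]; exact hc
  right_inv s := by
    match s with
    | Sum.inl f =>
        have h1 : (Fin.cons ((a:ℤ)) f.1 : Fin (n+2) → ℤ) 1 = (a:ℤ)+1 := by
          rw [show ((1:Fin (n+2))) = Fin.succ 0 from (Fin.succ_zero_eq_one).symm,
            Fin.cons_succ, f.2.1]
        simp only [dif_pos h1]
        exact congrArg Sum.inl (Subtype.ext rfl)
    | Sum.inr ⟨b, f⟩ =>
        have h1 : (Fin.cons ((a:ℤ)) f.1 : Fin (n+2) → ℤ) 1 = (b:ℤ) := by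
          rw [show ((1:Fin (n+2))) = Fin.succ 0 from (Fin.succ_zero_eq_one).symm,
            Fin.cons_succ, f.2.1]
        have h2 : ¬ ((Fin.cons ((a:ℤ)) f.1 : Fin (n+2) → ℤ) 1 = (a:ℤ)+1) := by
          rw [h1]; have : (b:ℕ) < a := b.isLt; omega
        simp only [dif_neg h2]
        refine congrArg Sum.inr (sigma_mk_eq ?_ _ _ rfl)
        apply Fin.ext
        show (((Fin.cons ((a:ℤ)) f.1 : Fin (n+2) → ℤ) 1).toNat) = (b:ℕ)
        rw [h1]; simp

lemma card_pathSet_succ (n a : ℕ) :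
    Nat.card (PathSet (n+1) (a:ℤ)) =
      Nat.card (PathSet n ((a:ℤ)+1)) + ∑ b ∈ range a, Nat.card (PathSet n (b:ℤ)) := by
  rw [Nat.card_congr (pathEquiv n a), Nat.card_sum]
  congr 1
  haveI : ∀ b : Fin a, Fintype (PathSet n (b:ℤ)) := fun b => Fintype.ofFinite _
  calc Nat.card (Σ b : Fin a, PathSet n (b:ℤ))
      = ∑ b : Fin a, Nat.card (PathSet n ((b:ℕ):ℤ)) := by
        simp [Nat.card_eq_fintype_card, Fintype.card_sigma]
    _ = ∑ b ∈ range a, Nat.card (PathSet n ((b:ℕ):ℤ)) :=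
        Fin.sum_univ_eq_sum_range (fun b => Nat.card (PathSet n ((b:ℕ):ℤ))) a

lemma q_mul_w : q * w = X := by
  rw [w, mul_comm X, ← mul_assoc, PowerSeries.mul_invOfUnit q 1 (by simp [q]), one_mul]

lemma X_pow_dvd_w_pow (n : ℕ) : (X : PowerSeries ℤ)^n ∣ w^n := by
  rw [w, mul_pow]; exact Dvd.intro _ rfl

lemma coeff_w_pow_eq_zero {N n : ℕ} (h : N < n) : coeff N (w^n) = 0 := by
  have := X_pow_dvd_w_pow n
  rw [PowerSeries.X_pow_dvd_iff] at this
  exact this N h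

lemma coeff_series (c : ℕ → ℕ) (N : ℕ) :
    coeff N (series c) = ∑ n ∈ range (N+1), (c n : ℤ) * coeff N (w ^ n) :=
  coeff_mk _ _

lemma coeff_series_eq (c : ℕ → ℕ) (N M : ℕ) (h : N < M) :
    coeff N (series c) = coeff N (∑ n ∈ range M, (c n : ℤ) • w ^ n) := by
  rw [coeff_series, map_sum]
  simp only [map_zsmul, smul_eq_mul]
  apply Finset.sum_subset (by intro x hx; simp at hx ⊢; omega)
  intro x hx hnx
  simp only [mem_range] at hx hnx
  rw [coeff_w_pow_eq_zero (by omega), mul_zero]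

lemma coeff_mul_congr {N : ℕ} {f A B : PowerSeries ℤ}
    (hAB : ∀ k ≤ N, coeff k A = coeff k B) :
    coeff N (f * A) = coeff N (f * B) := by
  rw [coeff_mul, coeff_mul]
  apply Finset.sum_congr rfl
  intro p hp
  rw [hAB p.2 (by rw [Finset.HasAntidiagonal.mem_antidiagonal] at hp; omega)]

lemma coeff_X_mul_congr {N : ℕ} {A B : PowerSeries ℤ}
    (hAB : ∀ k < N, coeff k A = coeff k B) :
    coeff N ((X:PowerSeries ℤ) * A) = coeff N (X * B) := by
  rw [coeff_mul, coeff_mul]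
  apply Finset.sum_congr rfl
  intro p hp
  rw [Finset.HasAntidiagonal.mem_antidiagonal] at hp
  rcases Nat.eq_zero_or_pos p.1 with h1 | h1
  · have : coeff p.1 (X:PowerSeries ℤ) = 0 := by
      rw [h1]; simp
    rw [this, zero_mul, zero_mul]
  · rw [hAB p.2 (by omega)]

lemma series_shift (c : ℕ → ℕ) :
    q * series c = ((c 0 : ℤ)) • q + X * series (fun n => c (n+1)) := by
  ext N
  have step1 : coeff N (q * series c)
      = coeff N (q * ∑ n ∈ range (N+1), (c n : ℤ) • w ^ n) := by
    apply coeff_mul_congr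
    intro k hk
    exact coeff_series_eq c k (N+1) (by omega)
  rw [step1]
  have expand : q * ∑ n ∈ range (N+1), (c n : ℤ) • w ^ n
      = (c 0 : ℤ) • q + X * ∑ n ∈ range N, (c (n+1) : ℤ) • w ^ n := by
    rw [Finset.mul_sum]
    have : ∀ n, q * ((c n : ℤ) • w ^ n) = (c n : ℤ) • (q * w ^ n) := by
      intro n; rw [mul_smul_comm]
    simp only [this]
    rw [Finset.sum_range_succ']
    simp only [pow_zero, mul_one]
    rw [add_comm]
    congr 1
    rw [Finset.mul_sum]
    apply Finset.sum_congr rfl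
    intro n _
    rw [mul_smul_comm, pow_succ', ← mul_assoc, q_mul_w, ← mul_smul_comm]
  rw [expand, map_add, map_add]
  congr 1
  apply coeff_X_mul_congr
  intro k hk
  exact (coeff_series_eq (fun n => c (n+1)) k N hk).symm

lemma series_add (c d : ℕ → ℕ) :
    series (fun n => c n + d n) = series c + series d := by
  ext N
  simp only [coeff_series, map_add, coeff_series]
  rw [← Finset.sum_add_distrib]
  apply Finset.sum_congr rfl
  intro n _
  push_cast
  ring

lemma series_sum (a : ℕ) (f : ℕ → ℕ → ℕ) :
    series (fun n => ∑ b ∈ range a, f b n) = ∑ b ∈ range a, series (f b) := by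
  ext N
  simp only [coeff_series, map_sum, coeff_series]
  rw [Finset.sum_comm]
  apply Finset.sum_congr rfl
  intro n _
  push_cast
  rw [Finset.sum_mul]


noncomputable def T (a : ℕ) : PowerSeries ℤ :=
  if a = 0 then q * (1+X) else X * q * (1+X)^a

lemma Talg (a : ℕ) :
    q * T a = (if a = 0 then q else 0) * (1+X)^2 + X * (T (a+1) + ∑ b ∈ range a, T b) := by
  rcases a with _ | m
  · rw [show T 0 = q*(1+X) from if_pos rfl, show T 1 = X*q*(1+X)^1 from if_neg one_ne_zero,
      if_pos rfl]
    simp only [range_zero, sum_empty, add_zero, q]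
    ring
  · have hgeom : (∑ i ∈ range m, (1+X:PowerSeries ℤ)^i) * X = (1+X)^m - 1 := by
      have h := geom_sum_mul (1+X : PowerSeries ℤ) m
      simpa using h
    have hsum : ∑ b ∈ range (m+1), T b
        = q*(1+X) + X*q*(1+X)*(∑ i ∈ range m, (1+X:PowerSeries ℤ)^i) := by
      rw [Finset.sum_range_succ']
      simp only [T, if_neg (Nat.succ_ne_zero _), if_pos rfl]
      rw [add_comm, Finset.mul_sum]
      congr 1
      apply Finset.sum_congr rfl
      intro i _
      ring
    rw [hsum]
    simp only [T, if_neg (Nat.succ_ne_zero _)]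
    simp only [q]
    linear_combination (-(X*(1+X+X^2)*(1+X))) * hgeom

noncomputable def Sser (a : ℕ) : PowerSeries ℤ :=
  series (fun n => pathCount n (a:ℤ) 0 (fun x => 0 ≤ x))

lemma key (a : ℕ) :
    q * Sser a = (if a = 0 then q else 0) + X * (Sser (a+1) + ∑ b ∈ range a, Sser b) := by
  rw [Sser, series_shift]
  congr 1
  · rw [pathCount_eq, card_pathSet_zero]
    by_cases h : a = 0
    · simp [h]
    · have : ¬ ((a:ℤ) = 0) := by exact_mod_cast h
      simp [h, this]
  · congr 1
    have hfun : (fun n => pathCount (n+1) (a:ℤ) 0 (fun x => 0 ≤ x))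
        = fun n => pathCount n ((a:ℤ)+1) 0 (fun x => 0 ≤ x)
            + ∑ b ∈ range a, pathCount n ((b:ℕ):ℤ) 0 (fun x => 0 ≤ x) := by
      funext n
      rw [pathCount_eq, card_pathSet_succ n a]
      congr 1
    rw [hfun, series_add, series_sum]
    rfl

noncomputable def Vser (a : ℕ) : PowerSeries ℤ := Sser a * (1+X)^2 - T a

lemma qV (a : ℕ) : q * Vser a = X * (Vser (a+1) + ∑ b ∈ range a, Vser b) := by
  have h1 := key a
  have h2 := Talg a
  simp only [Vser]
  rw [Finset.sum_sub_distrib, ← Finset.sum_mul]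
  linear_combination (1+X)^2 * h1 - h2

lemma coeff_V_zero : ∀ N : ℕ, ∀ a : ℕ, coeff N (Vser a) = 0 := by
  intro N
  induction N using Nat.strong_induction_on with
  | _ N IH =>
    intro a
    have hsplit : Vser a = q * Vser a - X * Vser a - X^2 * Vser a := by
      simp only [q]; ring
    have hqv : coeff N (q * Vser a) = 0 := by
      rw [qV]
      cases N with
      | zero =>
          rw [coeff_zero_eq_constantCoeff, map_mul, constantCoeff_X, zero_mul]
      | succ M =>
          rw [coeff_succ_X_mul, map_add, map_sum, IH M (Nat.lt_succ_self M)]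
          rw [Finset.sum_eq_zero (fun b _ => IH M (Nat.lt_succ_self M) b), add_zero]
    have hxv : coeff N ((X:PowerSeries ℤ) * Vser a) = 0 := by
      cases N with
      | zero => rw [coeff_zero_eq_constantCoeff, map_mul, constantCoeff_X, zero_mul]
      | succ M => rw [coeff_succ_X_mul]; exact IH M (Nat.lt_succ_self M) a
    have hxxv : coeff N ((X:PowerSeries ℤ)^2 * Vser a) = 0 := by
      rw [show ((X:PowerSeries ℤ)^2 * Vser a) = X * (X * Vser a) by ring]
      cases N with
      | zero => rw [coeff_zero_eq_constantCoeff, map_mul, constantCoeff_X, zero_mul]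
      | succ M =>
          rw [coeff_succ_X_mul]
          cases M with
          | zero => rw [coeff_zero_eq_constantCoeff, map_mul, constantCoeff_X, zero_mul]
          | succ K =>
              rw [coeff_succ_X_mul]
              exact IH K (by omega) a
    rw [hsplit, map_sub, map_sub, hqv, hxv, hxxv]
    ring

theorem stmt11 (t : ℕ) (ht : 1 ≤ t) :
    (series fun n => pathCount n t 0 (fun x => 0 ≤ x)) * (1 + X) ^ 2 =
      X * q * (1 + X) ^ t := by
  have hV : Vser t = 0 := by
    ext N
    rw [coeff_V_zero N t, map_zero]
  have := sub_eq_zero.mp hV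
  rw [Vser] at hV
  have h2 : Sser t * (1+X)^2 = T t := sub_eq_zero.mp hV
  rw [T, if_neg (by omega : ¬ t = 0)] at h2
  exact h2
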